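/- For every nonnegative integer n, the reduced factor complexity of the regular paperfolding sequence satisfies ρ_f^red(8n+5) = 6. -/
import Mathlib


/-- The reduction of a word: replace each maximal run of identical characters
by a single character. -/
def red {α : Type*} [DecidableEq α] (w : List α) : List α :=
  w.destutter (· ≠ ·)

/-- The length-`k` factor of the infinite sequence `x` (1-indexed) starting at
position `i`. -/
def factorAt {α : Type*} (x : ℕ → α) (i k : ℕ) : List α :=
  (List.range k).map (fun j => x (i + j))

/-- The reduced factor complexity: the number of length-`n` factors of `x`,
counted up to reduced-equivalence (`red v = red w`). -/
noncomputable def redFactorComplexity {α : Type*} [DecidableEq α]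
    (x : ℕ → α) (n : ℕ) : ℕ :=
  Set.ncard { u : List α | ∃ i ≥ 1, u = red (factorAt x i n) }

/-- The Thue–Morse sequence (1-indexed): `t n` is the parity of the number of
1's in the binary expansion of `n - 1`. -/
def thueMorse (n : ℕ) : Bool :=
  decide ((Nat.digits 2 (n - 1)).sum % 2 = 1)

/-- The number of alternations (occurrences of 01 or 10) in a binary word. -/
def alt (w : List Bool) : ℕ :=
  (List.zipWith (fun a b => a != b) w w.tail).count true

/-- The minimum number of alternations among length-`k` factors of Thue–Morse. -/
noncomputable def tmAltMin (k : ℕ) : ℕ :=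
  sInf { a : ℕ | ∃ i ≥ 1, a = alt (factorAt thueMorse i k) }

/-- The maximum number of alternations among length-`k` factors of Thue–Morse. -/
noncomputable def tmAltMax (k : ℕ) : ℕ :=
  sSup { a : ℕ | ∃ i ≥ 1, a = alt (factorAt thueMorse i k) }

/-- The Thue–Morse morphism `0 → 01`, `1 → 10`. -/
def mu (w : List Bool) : List Bool :=
  w.flatMap (fun b => if b then [true, false] else [false, true])

/-- The regular paperfolding sequence (1-indexed): writing `n = n' * 2^k` with
`n'` odd, `f n = 1` iff `n' ≡ 3 (mod 4)`. -/
def paperfold (n : ℕ) : Bool :=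
  decide ((n / 2 ^ (n.factorization 2)) % 4 = 3)

/-- The reduced abelian complexity: the number of length-`n` factors of `x`,
counted up to the equivalence identifying `v` and `w` whenever `red v` is a
rearrangement of the characters of `red w`. -/
noncomputable def redAbelianComplexity {α : Type*} [DecidableEq α]
    (x : ℕ → α) (n : ℕ) : ℕ :=
  Set.ncard { m : Multiset α | ∃ i ≥ 1, m = ↑(red (factorAt x i n)) }

lemma paperfold_odd {n : ℕ} (h : n % 2 = 1) : paperfold n = decide (n % 4 = 3) := by
  unfold paperfold
  rw [Nat.factorization_eq_zero_of_not_dvd (by omega)]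
  simp

lemma paperfold_two_mul (k : ℕ) : paperfold (2 * k) = paperfold k := by
  rcases Nat.eq_zero_or_pos k with rfl | hk
  · rfl
  · unfold paperfold
    rw [Nat.factorization_mul (by norm_num) (by omega)]
    simp [Nat.Prime.factorization Nat.prime_two, pow_succ, pow_add]
    rw [Nat.mul_div_mul_left _ _ (by norm_num : (0:ℕ) < 2)]

def dseq (i : ℕ) : ℕ := (paperfold i != paperfold (i+1)).toNat

def T (i t : ℕ) : ℕ := ∑ j ∈ Finset.range t, dseq (i + j)

lemma T_add (i s t : ℕ) : T i (s + t) = T i s + T (i + s) t := by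
  unfold T
  rw [Finset.sum_range_add]
  congr 1
  apply Finset.sum_congr rfl
  intro j _
  congr 1
  omega

lemma T_one (i : ℕ) : T i 1 = dseq i := by simp [T]

lemma pf1 : paperfold 1 = false := by rw [paperfold_odd] <;> simp
lemma pf3 : paperfold 3 = true := by rw [paperfold_odd] <;> simp

lemma d4 (k : ℕ) : dseq (4 * k) = (paperfold k).toNat := by
  unfold dseq
  rw [show 4 * k = 2 * (2 * k) by ring, paperfold_two_mul, paperfold_two_mul,
    show 2 * (2 * k) + 1 = 4 * k + 1 by ring,
    paperfold_odd (n := 4 * k + 1) (by omega)]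
  have h : (4 * k + 1) % 4 = 1 := by omega
  simp [h]

lemma d41 (k : ℕ) : dseq (4 * k + 1) = (paperfold (2 * k + 1)).toNat := by
  unfold dseq
  rw [paperfold_odd (n := 4 * k + 1) (by omega),
    show 4 * k + 1 + 1 = 2 * (2 * k + 1) by ring, paperfold_two_mul]
  have h : (4 * k + 1) % 4 = 1 := by omega
  simp [h]

lemma d42 (k : ℕ) : dseq (4 * k + 2) = (!paperfold (2 * k + 1)).toNat := by
  unfold dseq
  rw [show 4 * k + 2 = 2 * (2 * k + 1) by ring, paperfold_two_mul,
    show 2 * (2 * k + 1) + 1 = 4 * k + 3 by ring,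
    paperfold_odd (n := 4 * k + 3) (by omega)]
  have h : (4 * k + 3) % 4 = 3 := by omega
  simp [h]

lemma d43 (k : ℕ) : dseq (4 * k + 3) = (!paperfold (k + 1)).toNat := by
  unfold dseq
  rw [paperfold_odd (n := 4 * k + 3) (by omega),
    show 4 * k + 3 + 1 = 2 * (2 * (k + 1)) by ring, paperfold_two_mul, paperfold_two_mul]
  have h : (4 * k + 3) % 4 = 3 := by omega
  simp [h]

lemma toNat_le (b : Bool) : b.toNat ≤ 1 := by cases b <;> simp

lemma T_two (i : ℕ) : T i 2 = dseq i + dseq (i + 1) := by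
  simp [T, Finset.sum_range_succ]

lemma T_three (i : ℕ) : T i 3 = dseq i + dseq (i + 1) + dseq (i + 2) := by
  simp [T, Finset.sum_range_succ]

lemma T_four (i : ℕ) : T i 4 = dseq i + dseq (i + 1) + dseq (i + 2) + dseq (i + 3) := by
  simp [T, Finset.sum_range_succ]

lemma T4 (k : ℕ) : T (4 * k) 4 + (paperfold (k + 1)).toNat = 2 + (paperfold k).toNat := by
  rw [T_four, d4, d41, d42, d43]
  cases paperfold k <;> cases paperfold (2*k+1) <;> cases paperfold (k+1) <;> simp

lemma Tr0 (a m : ℕ) : T (4 * a) (4 * m) + (paperfold (a + m)).toNat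
    = 2 * m + (paperfold a).toNat := by
  induction m with
  | zero => simp [T]
  | succ m ih =>
    have h1 : T (4 * a) (4 * (m + 1)) = T (4 * a) (4 * m) + T (4 * (a + m)) 4 := by
      rw [show 4 * (m+1) = 4 * m + 4 by ring, T_add]
      congr 2
      ring
    have h2 := T4 (a + m)
    rw [show a + (m+1) = (a+m)+1 by ring]
    omega

lemma Tr1 (a m : ℕ) : T (4 * a + 1) (4 * m) = 2 * m := by
  have h1 : T (4 * a) (1 + 4 * m) = T (4 * a) 1 + T (4 * a + 1) (4 * m) := T_add _ _ _
  have h2 : T (4 * a) (4 * m + 1) = T (4 * a) (4 * m) + T (4 * (a + m)) 1 := by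
    rw [T_add]; congr 2; ring
  rw [show 1 + 4 * m = 4 * m + 1 by ring] at h1
  simp only [T_one, d4] at h1 h2
  have h3 := Tr0 a m
  omega

lemma T2start (k : ℕ) : T (4 * k) 2 = (paperfold k).toNat + (paperfold (2 * k + 1)).toNat := by
  rw [T_two, d4, d41]

lemma parity_pair {a m : ℕ} (hm : m % 2 = 1) :
    (paperfold (2 * a + 1)).toNat + (paperfold (2 * a + 2 * m + 1)).toNat = 1 := by
  rw [paperfold_odd (by omega), paperfold_odd (by omega)]
  have : ((2*a+1) % 4 = 3 ∧ (2*a+2*m+1) % 4 ≠ 3) ∨ ((2*a+1) % 4 ≠ 3 ∧ (2*a+2*m+1) % 4 = 3) := by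
    omega
  rcases this with ⟨h1, h2⟩ | ⟨h1, h2⟩ <;> simp [h1, h2]

lemma Tr2 {m : ℕ} (a : ℕ) (hm : m % 2 = 1) :
    T (4 * a + 2) (4 * m) + 2 * (paperfold (2 * a + 1)).toNat = 2 * m + 1 := by
  have h1 : T (4 * a) (2 + 4 * m) = T (4 * a) 2 + T (4 * a + 2) (4 * m) := T_add _ _ _
  have h2 : T (4 * a) (4 * m + 2) = T (4 * a) (4 * m) + T (4 * (a + m)) 2 := by
    rw [T_add]; congr 2; ring
  rw [show 2 + 4 * m = 4 * m + 2 by ring] at h1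
  simp only [T2start] at h1 h2
  have h3 := Tr0 a m
  have h4 := parity_pair (a := a) hm
  rw [show 2 * (a + m) + 1 = 2 * a + 2 * m + 1 by ring] at h2
  omega

lemma T3start (k : ℕ) : T (4 * k) 3 = (paperfold k).toNat + 1 := by
  rw [T_three, d4, d41, d42]
  cases paperfold (2*k+1) <;> simp

lemma Tr3 (a m : ℕ) : T (4 * a + 3) (4 * m) = 2 * m := by
  have h1 : T (4 * a) (3 + 4 * m) = T (4 * a) 3 + T (4 * a + 3) (4 * m) := T_add _ _ _
  have h2 : T (4 * a) (4 * m + 3) = T (4 * a) (4 * m) + T (4 * (a + m)) 3 := by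
    rw [T_add]; congr 2; ring
  rw [show 3 + 4 * m = 4 * m + 3 by ring] at h1
  simp only [T3start] at h1 h2
  have h3 := Tr0 a m
  omega

lemma T_mem {m : ℕ} (i : ℕ) (hm : m % 2 = 1) :
    T i (4 * m) + 1 = 2 * m ∨ T i (4 * m) = 2 * m ∨ T i (4 * m) = 2 * m + 1 := by
  obtain ⟨a, r, hr, rfl⟩ : ∃ a r, r < 4 ∧ i = 4 * a + r :=
    ⟨i / 4, i % 4, by omega, by omega⟩
  interval_cases r
  · have := Tr0 a m
    have := toNat_le (paperfold (a + m))
    have := toNat_le (paperfold a)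
    simp only [Nat.add_zero] at *
    omega
  · have := Tr1 a m; omega
  · have := Tr2 a hm
    have := toNat_le (paperfold (2 * a + 1))
    omega
  · have := Tr3 a m; omega


def altw : Bool → ℕ → List Bool
  | _, 0 => []
  | b, (k + 1) => b :: altw (!b) k

lemma altw_length (b : Bool) (k : ℕ) : (altw b k).length = k := by
  induction k generalizing b with
  | zero => rfl
  | succ k ih => simp [altw, ih]

lemma altw_ne_of_len {b c : Bool} {j k : ℕ} (h : j ≠ k) : altw b j ≠ altw c k := by
  intro he
  apply h
  rw [← altw_length b j, ← altw_length c k, he]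

lemma altw_ne_of_head {b c : Bool} {j k : ℕ} (h : b ≠ c) (hj : j ≠ 0) (hk : k ≠ 0) :
    altw b j ≠ altw c k := by
  obtain ⟨j, rfl⟩ := Nat.exists_eq_succ_of_ne_zero hj
  obtain ⟨k, rfl⟩ := Nat.exists_eq_succ_of_ne_zero hk
  simp [altw]
  intro hbc
  exact fun _ => h hbc

lemma alt_cons_cons (a b : Bool) (t : List Bool) :
    alt (a :: b :: t) = (a != b).toNat + alt (b :: t) := by
  simp [alt, List.count_cons]
  cases a <;> cases b <;> simp [Nat.add_comm]

lemma destutter'_eq (l : List Bool) : ∀ a : Bool,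
    List.destutter' (· ≠ ·) a l = altw a (alt (a :: l) + 1) := by
  induction l with
  | nil => intro a; simp [List.destutter', alt, altw]
  | cons b t ih =>
    intro a
    rw [alt_cons_cons]
    by_cases h : a = b
    · subst h
      simp [List.destutter', ih]
    · have hb : b = !a := by cases a <;> cases b <;> simp_all
      subst hb
      rw [List.destutter'_cons_pos _ (by simpa using h)]
      rw [ih]
      have : (a != !a) = true := by cases a <;> simp
      simp only [this, Bool.toNat_true]
      rw [show 1 + alt ((!a) :: t) + 1 = (alt ((!a) :: t) + 1) + 1 by ring]
      rfl

lemma red_cons (a : Bool) (l : List Bool) :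
    red (a :: l) = altw a (alt (a :: l) + 1) := by
  rw [red, List.destutter_cons', destutter'_eq]

lemma factorAt_succ {α : Type*} (x : ℕ → α) (i t : ℕ) :
    factorAt x i (t + 1) = x i :: factorAt x (i + 1) t := by
  unfold factorAt
  rw [List.range_succ_eq_map]
  simp [List.map_map, Function.comp]
  congr 1
  intro a _
  congr 1
  omega


lemma alt_factor (t : ℕ) : ∀ i, alt (factorAt paperfold i (t + 1)) = T i t := by
  induction t with
  | zero =>
    intro i
    simp [factorAt, alt, T, List.range_succ]
  | succ t ih =>
    intro i
    rw [factorAt_succ, factorAt_succ, alt_cons_cons, ← factorAt_succ, ih (i + 1)]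
    have h : T i (t + 1) = T i 1 + T (i + 1) t := by
      rw [show t + 1 = 1 + t by ring, T_add]
    rw [h, T_one]
    rfl

lemma red_factor (i w : ℕ) :
    red (factorAt paperfold i (w + 1)) = altw (paperfold i) (T i w + 1) := by
  rw [factorAt_succ, red_cons, ← factorAt_succ, alt_factor]

lemma pf2 : paperfold 2 = false := by
  rw [show 2 = 2 * 1 by norm_num, paperfold_two_mul, pf1]
lemma pf6 : paperfold 6 = true := by
  rw [show 6 = 2 * 3 by norm_num, paperfold_two_mul, pf3]
lemma pf8 : paperfold 8 = false := by
  rw [show 8 = 2 * 4 by norm_num, paperfold_two_mul, show 4 = 2 * 2 by norm_num,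
    paperfold_two_mul, pf2]
lemma pf16 : paperfold 16 = false := by
  rw [show 16 = 2 * 8 by norm_num, paperfold_two_mul, pf8]
lemma pf24 : paperfold 24 = true := by
  rw [show 24 = 2 * 12 by norm_num, paperfold_two_mul, show 12 = 2 * 6 by norm_num,
    paperfold_two_mul, pf6]
lemma pf48 : paperfold 48 = true := by
  rw [show 48 = 2 * 24 by norm_num, paperfold_two_mul, pf24]

lemma pf_odd1 {j : ℕ} (h : j % 4 = 1) : paperfold j = false := by
  rw [paperfold_odd (by omega)]
  simp [h]

lemma pf_odd3 {j : ℕ} (h : j % 4 = 3) : paperfold j = true := by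
  rw [paperfold_odd (by omega)]
  simp [h]


theorem stmt16 (n : ℕ) :
    redFactorComplexity paperfold (8 * n + 5) = 6 := by
  set m := 2 * n + 1 with hmdef
  have hm2 : m % 2 = 1 := by omega
  have hm1 : 1 ≤ m := by omega
  have hlen : 8 * n + 5 = 4 * m + 1 := by omega
  -- values of T at the witness positions
  have t2' := Tr2 (m := m) 0 hm2
  rw [show 4 * 0 + 2 = 2 by norm_num, show 2 * 0 + 1 = 1 by norm_num, pf1] at t2'
  have hT2 : T 2 (4 * m) + 1 = 2 * m + 2 := by simp at t2'; omega
  have t6' := Tr2 (m := m) 1 hm2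
  rw [show 4 * 1 + 2 = 6 by norm_num, show 2 * 1 + 1 = 3 by norm_num, pf3] at t6'
  have hT6 : T 6 (4 * m) + 1 = 2 * m := by simp at t6'; omega
  have t8 := Tr0 2 m
  rw [show 4 * 2 = 8 by norm_num, pf2] at t8
  have t16 := Tr0 4 m
  rw [show (4 : ℕ) * 4 = 16 by norm_num] at t16
  have hpf4 : paperfold 4 = false := by
    rw [show 4 = 2 * 2 by norm_num, paperfold_two_mul, pf2]
  rw [hpf4] at t16
  have t24 := Tr0 6 m
  rw [show (4 : ℕ) * 6 = 24 by norm_num, pf6] at t24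
  have t48 := Tr0 12 m
  rw [show (4 : ℕ) * 12 = 48 by norm_num] at t48
  have hpf12 : paperfold 12 = true := by
    rw [show 12 = 2 * 6 by norm_num, paperfold_two_mul, pf6]
  rw [hpf12] at t48
  -- set equality
  have hset : { u : List Bool | ∃ i ≥ 1, u = red (factorAt paperfold i (8 * n + 5)) } =
      {altw false (2 * m), altw false (2 * m + 1), altw false (2 * m + 2),
       altw true (2 * m), altw true (2 * m + 1), altw true (2 * m + 2)} := by
    ext u
    simp only [Set.mem_setOf_eq, Set.mem_insert_iff, Set.mem_singleton_iff]
    constructor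
    · rintro ⟨i, hi, rfl⟩
      rw [hlen, red_factor]
      have hv : T i (4 * m) + 1 = 2 * m ∨ T i (4 * m) + 1 = 2 * m + 1 ∨
          T i (4 * m) + 1 = 2 * m + 2 := by
        rcases T_mem i hm2 with h | h | h <;> omega
      rcases hv with h | h | h <;> rw [h] <;> cases paperfold i <;> tauto
    · have key : ∀ (b : Bool) (k i : ℕ), 1 ≤ i → paperfold i = b → T i (4 * m) + 1 = k →
          (∃ i ≥ 1, altw b k = red (factorAt paperfold i (8 * n + 5))) := by
        intro b k i hi hb hk
        exact ⟨i, hi, by rw [hlen, red_factor, hb, hk]⟩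
      rcases Nat.even_or_odd n with ⟨p, hp⟩ | ⟨p, hp⟩
      · -- n even : m = 4p+1
        have h2m : paperfold (2 + m) = true := pf_odd3 (by omega)
        have h4m : paperfold (4 + m) = false := pf_odd1 (by omega)
        have h6m : paperfold (6 + m) = true := pf_odd3 (by omega)
        have h12m : paperfold (12 + m) = false := pf_odd1 (by omega)
        rw [h2m] at t8; rw [h4m] at t16; rw [h6m] at t24; rw [h12m] at t48
        simp only [Bool.toNat_true, Bool.toNat_false] at t8 t16 t24 t48
        rintro (rfl | rfl | rfl | rfl | rfl | rfl)
        · exact key false (2 * m) 8 (by norm_num) pf8 (by omega)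
        · exact key false (2 * m + 1) 16 (by norm_num) pf16 (by omega)
        · exact key false (2 * m + 2) 2 (by norm_num) pf2 hT2
        · exact key true (2 * m) 6 (by norm_num) pf6 hT6
        · exact key true (2 * m + 1) 24 (by norm_num) pf24 (by omega)
        · exact key true (2 * m + 2) 48 (by norm_num) pf48 (by omega)
      · -- n odd : m = 4p+3
        have h2m : paperfold (2 + m) = false := pf_odd1 (by omega)
        have h4m : paperfold (4 + m) = true := pf_odd3 (by omega)
        have h6m : paperfold (6 + m) = false := pf_odd1 (by omega)
        have h12m : paperfold (12 + m) = true := pf_odd3 (by omega)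
        rw [h2m] at t8; rw [h4m] at t16; rw [h6m] at t24; rw [h12m] at t48
        simp only [Bool.toNat_true, Bool.toNat_false] at t8 t16 t24 t48
        rintro (rfl | rfl | rfl | rfl | rfl | rfl)
        · exact key false (2 * m) 16 (by norm_num) pf16 (by omega)
        · exact key false (2 * m + 1) 8 (by norm_num) pf8 (by omega)
        · exact key false (2 * m + 2) 2 (by norm_num) pf2 hT2
        · exact key true (2 * m) 6 (by norm_num) pf6 hT6
        · exact key true (2 * m + 1) 48 (by norm_num) pf48 (by omega)
        · exact key true (2 * m + 2) 24 (by norm_num) pf24 (by omega)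
  rw [redFactorComplexity, hset]
  have n1 : altw false (2 * m) ∉ ({altw false (2 * m + 1), altw false (2 * m + 2),
      altw true (2 * m), altw true (2 * m + 1), altw true (2 * m + 2)} : Set (List Bool)) := by
    simp only [Set.mem_insert_iff, Set.mem_singleton_iff, not_or]
    exact ⟨altw_ne_of_len (by omega), altw_ne_of_len (by omega),
      altw_ne_of_head (by simp) (by omega) (by omega),
      altw_ne_of_len (by omega), altw_ne_of_len (by omega)⟩
  have n2 : altw false (2 * m + 1) ∉ ({altw false (2 * m + 2),
      altw true (2 * m), altw true (2 * m + 1), altw true (2 * m + 2)} : Set (List Bool)) := by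
    simp only [Set.mem_insert_iff, Set.mem_singleton_iff, not_or]
    exact ⟨altw_ne_of_len (by omega), altw_ne_of_len (by omega),
      altw_ne_of_head (by simp) (by omega) (by omega), altw_ne_of_len (by omega)⟩
  have n3 : altw false (2 * m + 2) ∉ ({altw true (2 * m), altw true (2 * m + 1),
      altw true (2 * m + 2)} : Set (List Bool)) := by
    simp only [Set.mem_insert_iff, Set.mem_singleton_iff, not_or]
    exact ⟨altw_ne_of_len (by omega), altw_ne_of_len (by omega),
      altw_ne_of_head (by simp) (by omega) (by omega)⟩
  have n4 : altw true (2 * m) ∉ ({altw true (2 * m + 1),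
      altw true (2 * m + 2)} : Set (List Bool)) := by
    simp only [Set.mem_insert_iff, Set.mem_singleton_iff, not_or]
    exact ⟨altw_ne_of_len (by omega), altw_ne_of_len (by omega)⟩
  have n5 : altw true (2 * m + 1) ∉ ({altw true (2 * m + 2)} : Set (List Bool)) := by
    simp only [Set.mem_singleton_iff]
    exact altw_ne_of_len (by omega)
  rw [Set.ncard_insert_of_notMem n1 (Set.toFinite _),
    Set.ncard_insert_of_notMem n2 (Set.toFinite _),
    Set.ncard_insert_of_notMem n3 (Set.toFinite _),
    Set.ncard_insert_of_notMem n4 (Set.toFinite _),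
    Set.ncard_insert_of_notMem n5 (Set.toFinite _),
    Set.ncard_singleton]
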